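/- Exact macroscopic stability of DEP under the basic coupling: let ζ, ξ : ℤ → {0,1} be finite configurations (each with finitely many 1's). Then for every x ∈ ℤ and α ∈ {0,1}, Δ(U_{x,α}(ζ), U_{x,α}(ξ)) ≤ Δ(ζ, ξ). -/

import Mathlib

/-- The configuration obtained from `η` by exchanging the values `η(x)` and `η(y)`. -/
def confSwap (η : ℤ → ℤ) (x y : ℤ) : ℤ → ℤ :=
  fun z => if z = x then η y else if z = y then η x else η z

/-- The DEP elementary update `Φ_x`. -/
def depPhi (x : ℤ) (η : ℤ → ℤ) : ℤ → ℤ :=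
  if η x = η (x + 1) then confSwap η x (x + 2) else confSwap η x (x + 1)

/-- The basic coupling update `U_{x,α}`: apply `Φ_x` if `η(x) = α`, do nothing otherwise. -/
def depU (x α : ℤ) (η : ℤ → ℤ) : ℤ → ℤ :=
  if η x = α then depPhi x η else η

/-- The partial sum `∑_{y ≤ x} (ζ(y) - ξ(y))` of signed discrepancies (a finite sum
when `ζ` and `ξ` are finite configurations). -/
noncomputable def discrepancyPartialSum (ζ ξ : ℤ → ℤ) (x : ℤ) : ℤ :=
  ∑ᶠ y ∈ {y : ℤ | y ≤ x}, (ζ y - ξ y)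

/-- `Δ(ζ, ξ) = sup_x |∑_{y ≤ x} (ζ(y) - ξ(y))|`. -/
noncomputable def depDelta (ζ ξ : ℤ → ℤ) : ℤ :=
  ⨆ x : ℤ, |discrepancyPartialSum ζ ξ x|

/-! ### Auxiliary lemmas -/

lemma confSwap_self (η : ℤ → ℤ) (x y : ℤ) : confSwap η x y x = η y := by
  simp [confSwap]

lemma confSwap_right (η : ℤ → ℤ) (x y : ℤ) (h : y ≠ x) : confSwap η x y y = η x := by
  simp [confSwap, h]

lemma confSwap_of_ne (η : ℤ → ℤ) (x y z : ℤ) (h1 : z ≠ x) (h2 : z ≠ y) :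
    confSwap η x y z = η z := by
  simp [confSwap, h1, h2]

/-- `depU` does not change the configuration outside the window `{x, x+1, x+2}`. -/
lemma depU_of_ne (η : ℤ → ℤ) (x α z : ℤ) (h1 : z ≠ x) (h2 : z ≠ x + 1) (h3 : z ≠ x + 2) :
    depU x α η z = η z := by
  unfold depU depPhi
  split_ifs <;> simp [confSwap_of_ne, h1, h2, h3]

/-- `depU` conserves the total mass in the window `{x, x+1, x+2}`. -/
lemma depU_conserve (η : ℤ → ℤ) (x α : ℤ) :
    depU x α η x + depU x α η (x + 1) + depU x α η (x + 2)
      = η x + η (x + 1) + η (x + 2) := by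
  have e1 : confSwap η x (x + 2) x = η (x + 2) := confSwap_self η x (x + 2)
  have e2 : confSwap η x (x + 2) (x + 1) = η (x + 1) :=
    confSwap_of_ne η x (x + 2) (x + 1) (by omega) (by omega)
  have e3 : confSwap η x (x + 2) (x + 2) = η x := confSwap_right η x (x + 2) (by omega)
  have e4 : confSwap η x (x + 1) x = η (x + 1) := confSwap_self η x (x + 1)
  have e5 : confSwap η x (x + 1) (x + 1) = η x := confSwap_right η x (x + 1) (by omega)
  have e6 : confSwap η x (x + 1) (x + 2) = η (x + 2) :=
    confSwap_of_ne η x (x + 1) (x + 2) (by omega) (by omega)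
  unfold depU depPhi
  split_ifs <;> simp only [e1, e2, e3, e4, e5, e6] <;> ring

set_option maxHeartbeats 1000000 in
/-- The key combinatorial fact about the coupled update. -/
lemma depU_key (ζ ξ : ℤ → ℤ)
    (hζ : ∀ z, ζ z = 0 ∨ ζ z = 1) (hξ : ∀ z, ξ z = 0 ∨ ξ z = 1)
    (x α : ℤ) (hα : α = 0 ∨ α = 1) :
    (depU x α ζ x - depU x α ξ x = 0 ∨
     depU x α ζ x - depU x α ξ x = ζ x - ξ x ∨
     depU x α ζ x - depU x α ξ x = ζ x + ζ (x + 1) - ξ x - ξ (x + 1) ∨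
     depU x α ζ x - depU x α ξ x
       = ζ x + ζ (x + 1) + ζ (x + 2) - ξ x - ξ (x + 1) - ξ (x + 2)) ∧
    (depU x α ζ x + depU x α ζ (x + 1) - depU x α ξ x - depU x α ξ (x + 1) = 0 ∨
     depU x α ζ x + depU x α ζ (x + 1) - depU x α ξ x - depU x α ξ (x + 1) = ζ x - ξ x ∨
     depU x α ζ x + depU x α ζ (x + 1) - depU x α ξ x - depU x α ξ (x + 1)
       = ζ x + ζ (x + 1) - ξ x - ξ (x + 1) ∨
     depU x α ζ x + depU x α ζ (x + 1) - depU x α ξ x - depU x α ξ (x + 1)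
       = ζ x + ζ (x + 1) + ζ (x + 2) - ξ x - ξ (x + 1) - ξ (x + 2)) := by
  have e1 : confSwap ζ x (x + 2) x = ζ (x + 2) := confSwap_self ζ x (x + 2)
  have e2 : confSwap ζ x (x + 2) (x + 1) = ζ (x + 1) :=
    confSwap_of_ne ζ x (x + 2) (x + 1) (by omega) (by omega)
  have e3 : confSwap ζ x (x + 1) x = ζ (x + 1) := confSwap_self ζ x (x + 1)
  have e4 : confSwap ζ x (x + 1) (x + 1) = ζ x := confSwap_right ζ x (x + 1) (by omega)
  have f1 : confSwap ξ x (x + 2) x = ξ (x + 2) := confSwap_self ξ x (x + 2)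
  have f2 : confSwap ξ x (x + 2) (x + 1) = ξ (x + 1) :=
    confSwap_of_ne ξ x (x + 2) (x + 1) (by omega) (by omega)
  have f3 : confSwap ξ x (x + 1) x = ξ (x + 1) := confSwap_self ξ x (x + 1)
  have f4 : confSwap ξ x (x + 1) (x + 1) = ξ x := confSwap_right ξ x (x + 1) (by omega)
  have b1 := hζ x; have b2 := hζ (x + 1); have b3 := hζ (x + 2)
  have c1 := hξ x; have c2 := hξ (x + 1); have c3 := hξ (x + 2)
  refine ⟨?_, ?_⟩ <;>
    (unfold depU depPhi
     split_ifs <;> simp only [e1, e2, e3, e4, f1, f2, f3, f4] <;> first | omega | tauto)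

/-! ### Partial sums -/

lemma psum_eq_sum (f : ℤ → ℤ) (hf : (Function.support f).Finite) (x : ℤ) :
    ∑ᶠ y ∈ {y : ℤ | y ≤ x}, f y = ∑ z ∈ (hf.toFinset.filter (· ≤ x)), f z := by
  refine finsum_mem_eq_sum_of_inter_support_eq f ?_
  ext z
  simp only [Set.mem_inter_iff, Set.mem_setOf_eq, Finset.coe_filter, Set.Finite.mem_toFinset,
    Function.mem_support, Set.mem_setOf_eq]
  tauto

lemma psum_succ (f : ℤ → ℤ) (hf : (Function.support f).Finite) (x : ℤ) :
    ∑ᶠ y ∈ {y : ℤ | y ≤ x + 1}, f y = (∑ᶠ y ∈ {y : ℤ | y ≤ x}, f y) + f (x + 1) := by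
  have hs : {y : ℤ | y ≤ x + 1} = insert (x + 1) {y : ℤ | y ≤ x} := by
    ext z; simp only [Set.mem_setOf_eq, Set.mem_insert_iff]; omega
  rw [hs, finsum_mem_insert' f (by simp) (hf.inter_of_right _)]
  ring

lemma psum_sub_one (f : ℤ → ℤ) (hf : (Function.support f).Finite) (x : ℤ) :
    ∑ᶠ y ∈ {y : ℤ | y ≤ x}, f y = (∑ᶠ y ∈ {y : ℤ | y ≤ x - 1}, f y) + f x := by
  have := psum_succ f hf (x - 1)
  simpa using this

theorem depU_macroscopic_stability
    (ζ ξ : ℤ → ℤ)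
    (hζ : ∀ z, ζ z = 0 ∨ ζ z = 1)
    (hξ : ∀ z, ξ z = 0 ∨ ξ z = 1)
    (hζfin : {z : ℤ | ζ z = 1}.Finite)
    (hξfin : {z : ℤ | ξ z = 1}.Finite)
    (x α : ℤ) (hα : α = 0 ∨ α = 1) :
    depDelta (depU x α ζ) (depU x α ξ) ≤ depDelta ζ ξ := by
  classical
  set g : ℤ → ℤ := fun y => ζ y - ξ y with hg
  set g' : ℤ → ℤ := fun y => depU x α ζ y - depU x α ξ y with hg'
  have hgfin : (Function.support g).Finite := by
    refine Set.Finite.subset (hζfin.union hξfin) ?_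
    intro z hz
    simp only [Function.mem_support, hg] at hz
    simp only [Set.mem_union, Set.mem_setOf_eq]
    rcases hζ z with h1 | h1 <;> rcases hξ z with h2 | h2 <;> omega
  have hg'g : ∀ z, z ≠ x → z ≠ x + 1 → z ≠ x + 2 → g' z = g z := by
    intro z h1 h2 h3
    simp only [hg', hg, depU_of_ne ζ x α z h1 h2 h3, depU_of_ne ξ x α z h1 h2 h3]
  have hg'fin : (Function.support g').Finite := by
    refine Set.Finite.subset (hgfin.union (Set.finite_Icc x (x + 2))) ?_
    intro z hz
    by_cases h1 : z = x
    · right; simp [h1]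
    by_cases h2 : z = x + 1
    · right; simp [h2]
    by_cases h3 : z = x + 2
    · right; simp [h3]
    left
    simpa [Function.mem_support, hg'g z h1 h2 h3] using hz
  -- partial sums
  have hD : ∀ y, discrepancyPartialSum ζ ξ y = ∑ᶠ z ∈ {z : ℤ | z ≤ y}, g z := fun y => rfl
  have hD' : ∀ y, discrepancyPartialSum (depU x α ζ) (depU x α ξ) y
      = ∑ᶠ z ∈ {z : ℤ | z ≤ y}, g' z := fun y => rfl
  set D : ℤ → ℤ := fun y => ∑ᶠ z ∈ {z : ℤ | z ≤ y}, g z with hDdef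
  set D' : ℤ → ℤ := fun y => ∑ᶠ z ∈ {z : ℤ | z ≤ y}, g' z with hD'def
  -- boundedness of the original family
  have hbound : ∀ y, |D y| ≤ ∑ z ∈ hgfin.toFinset, |g z| := by
    intro y
    show |∑ᶠ z ∈ {z : ℤ | z ≤ y}, g z| ≤ _
    rw [psum_eq_sum g hgfin y]
    calc |∑ z ∈ hgfin.toFinset.filter (· ≤ y), g z|
        ≤ ∑ z ∈ hgfin.toFinset.filter (· ≤ y), |g z| := Finset.abs_sum_le_sum_abs _ _
      _ ≤ ∑ z ∈ hgfin.toFinset, |g z| := by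
          refine Finset.sum_le_sum_of_subset_of_nonneg (Finset.filter_subset _ _) ?_
          intro i _ _; exact abs_nonneg _
  have hbdd : BddAbove (Set.range fun y => |D y|) := by
    refine ⟨∑ z ∈ hgfin.toFinset, |g z|, ?_⟩
    rintro b ⟨y, rfl⟩
    exact hbound y
  have hle : ∀ y, |D y| ≤ depDelta ζ ξ := by
    intro y
    have := le_ciSup hbdd y
    exact this
  -- equality of partial sums away from the window
  have hlow : ∀ y, y ≤ x - 1 → D' y = D y := by
    intro y hy
    refine finsum_mem_congr rfl ?_
    intro z hz
    simp only [Set.mem_setOf_eq] at hz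
    exact hg'g z (by omega) (by omega) (by omega)
  have hDx2 : D' (x + 2) = D (x + 2) := by
    have h1 : D' (x + 2) = D' (x - 1) + g' x + g' (x + 1) + g' (x + 2) := by
      have a1 := psum_sub_one g' hg'fin (x + 2)
      have a2 := psum_sub_one g' hg'fin (x + 1)
      have a3 := psum_sub_one g' hg'fin x
      have ex1 : x + 2 - 1 = x + 1 := by ring
      have ex2 : x + 1 - 1 = x := by ring
      rw [ex1] at a1; rw [ex2] at a2
      simp only [hD'def]
      omega
    have h2 : D (x + 2) = D (x - 1) + g x + g (x + 1) + g (x + 2) := by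
      have a1 := psum_sub_one g hgfin (x + 2)
      have a2 := psum_sub_one g hgfin (x + 1)
      have a3 := psum_sub_one g hgfin x
      have ex1 : x + 2 - 1 = x + 1 := by ring
      have ex2 : x + 1 - 1 = x := by ring
      rw [ex1] at a1; rw [ex2] at a2
      simp only [hDdef]
      omega
    have hcons : g' x + g' (x + 1) + g' (x + 2) = g x + g (x + 1) + g (x + 2) := by
      have c1 := depU_conserve ζ x α
      have c2 := depU_conserve ξ x α
      have e0 : g' x = depU x α ζ x - depU x α ξ x := rfl
      have e0' : g' (x + 1) = depU x α ζ (x + 1) - depU x α ξ (x + 1) := rfl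
      have e0'' : g' (x + 2) = depU x α ζ (x + 2) - depU x α ξ (x + 2) := rfl
      have e1 : g x = ζ x - ξ x := rfl
      have e2 : g (x + 1) = ζ (x + 1) - ξ (x + 1) := rfl
      have e3 : g (x + 2) = ζ (x + 2) - ξ (x + 2) := rfl
      omega
    rw [h1, h2, hlow (x - 1) le_rfl]
    omega
  have hhigh : ∀ y, x + 2 ≤ y → D' y = D y := by
    intro y hy
    refine Int.le_induction (motive := fun n _ => D' n = D n) hDx2 ?_ y hy
    intro n hn ih
    have a1 := psum_succ g' hg'fin n
    have a2 := psum_succ g hgfin n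
    have : g' (n + 1) = g (n + 1) := hg'g (n + 1) (by omega) (by omega) (by omega)
    simp only [hD'def, hDdef] at ih ⊢
    omega
  -- the key combinatorial estimates at x and x+1
  obtain ⟨key1, key2⟩ := depU_key ζ ξ hζ hξ x α hα
  have recD : ∀ y : ℤ, D y = D (y - 1) + g y := fun y => psum_sub_one g hgfin y
  have recD' : ∀ y : ℤ, D' y = D' (y - 1) + g' y := fun y => psum_sub_one g' hg'fin y
  have hDm : D' (x - 1) = D (x - 1) := hlow (x - 1) le_rfl
  have hgx : g' x = depU x α ζ x - depU x α ξ x := rfl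
  have hDXval : D' x = D (x - 1) + g' x := by rw [recD' x, hDm]
  have hDX1val : D' (x + 1) = D (x - 1) + g' x + g' (x + 1) := by
    have := recD' (x + 1)
    have ex : x + 1 - 1 = x := by ring
    rw [ex] at this
    rw [this, hDXval]
  have hDvals : D x = D (x - 1) + g x ∧ D (x + 1) = D (x - 1) + g x + g (x + 1)
      ∧ D (x + 2) = D (x - 1) + g x + g (x + 1) + g (x + 2) := by
    have a1 := recD x
    have a2 := recD (x + 1)
    have a3 := recD (x + 2)
    have ex1 : x + 1 - 1 = x := by ring
    have ex2 : x + 2 - 1 = x + 1 := by ring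
    rw [ex1] at a2; rw [ex2] at a3
    omega
  have keyx : |D' x| ≤ depDelta ζ ξ := by
    have hgx' : g' x = 0 ∨ g' x = g x ∨ g' x = g x + g (x + 1)
        ∨ g' x = g x + g (x + 1) + g (x + 2) := by
      have e0 : g' x = depU x α ζ x - depU x α ξ x := rfl
      have e1 : g x = ζ x - ξ x := rfl
      have e2 : g (x + 1) = ζ (x + 1) - ξ (x + 1) := rfl
      have e3 : g (x + 2) = ζ (x + 2) - ξ (x + 2) := rfl
      rcases key1 with h | h | h | h <;> omega
    rcases hgx' with h | h | h | h
    · rw [hDXval, h]; simpa using hle (x - 1)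
    · rw [hDXval, h, ← hDvals.1]; exact hle x
    · rw [hDXval, h]
      have : D (x - 1) + (g x + g (x + 1)) = D (x + 1) := by omega
      rw [this]; exact hle (x + 1)
    · rw [hDXval, h]
      have : D (x - 1) + (g x + g (x + 1) + g (x + 2)) = D (x + 2) := by omega
      rw [this]; exact hle (x + 2)
  have keyx1 : |D' (x + 1)| ≤ depDelta ζ ξ := by
    have hgx' : g' x + g' (x + 1) = 0 ∨ g' x + g' (x + 1) = g x
        ∨ g' x + g' (x + 1) = g x + g (x + 1)
        ∨ g' x + g' (x + 1) = g x + g (x + 1) + g (x + 2) := by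
      have e0 : g' x = depU x α ζ x - depU x α ξ x := rfl
      have e0' : g' (x + 1) = depU x α ζ (x + 1) - depU x α ξ (x + 1) := rfl
      have e1 : g x = ζ x - ξ x := rfl
      have e2 : g (x + 1) = ζ (x + 1) - ξ (x + 1) := rfl
      have e3 : g (x + 2) = ζ (x + 2) - ξ (x + 2) := rfl
      rcases key2 with h | h | h | h <;> omega
    rcases hgx' with h | h | h | h
    · have : D' (x + 1) = D (x - 1) := by omega
      rw [this]; exact hle (x - 1)
    · have : D' (x + 1) = D x := by omega
      rw [this]; exact hle x
    · have : D' (x + 1) = D (x + 1) := by omega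
      rw [this]; exact hle (x + 1)
    · have : D' (x + 1) = D (x + 2) := by omega
      rw [this]; exact hle (x + 2)
  -- conclude
  have : ∀ y, |D' y| ≤ depDelta ζ ξ := by
    intro y
    rcases (show y ≤ x - 1 ∨ y = x ∨ y = x + 1 ∨ x + 2 ≤ y by omega) with hy | hy | hy | hy
    · rw [hlow y hy]; exact hle y
    · rw [hy]; exact keyx
    · rw [hy]; exact keyx1
    · rw [hhigh y hy]; exact hle y
  exact ciSup_le this
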